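/- Let G be the graph on the 21 vertices {x_i, y_i, z_i : i ∈ ℤ/7ℤ} with edges {x_i, x_{i+1}}, {x_i, y_i}, {y_i, z_i}, {z_i, y_{i+1}}, {z_i, z_{i+3}} (indices modulo 7), and define μ : V → ℤ by μ(x_i) = μ(z_i) = 4 and μ(y_i) = 3 for all i. Then there do not exist (μ₁, d₁) ∈ U^(1) and (μ₂, d₂) ∈ U^(1) with μ₁ + μ₂ = μ and d₁ + d₂ = 10. -/

import Mathlib

variable {V : Type*}

/-- A stable (independent) set of a graph. -/
def IsStableSet (G : SimpleGraph V) (S : Set V) : Prop :=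
  ∀ u ∈ S, ∀ v ∈ S, ¬ G.Adj u v

/-- The vertex set of a cycle subgraph of `G`, given by an injective
parametrization `c : ZMod m → V` (`m ≥ 3`) with consecutive vertices adjacent. -/
def IsCycleSet (G : SimpleGraph V) (C : Set V) : Prop :=
  ∃ (m : ℕ) (c : ZMod m → V), 3 ≤ m ∧ Function.Injective c ∧
    (∀ i, G.Adj (c i) (c (i + 1))) ∧ C = Set.range c

/-- The vertex set of an odd cycle subgraph of `G`. -/
def IsOddCycleSet (G : SimpleGraph V) (C : Set V) : Prop :=
  ∃ (m : ℕ) (c : ZMod m → V), 3 ≤ m ∧ Odd m ∧ Function.Injective c ∧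
    (∀ i, G.Adj (c i) (c (i + 1))) ∧ C = Set.range c

/-- The vertex set of a chordless odd cycle subgraph of `G`: the only edges of `G`
between vertices of the cycle are the cycle edges. -/
def IsChordlessOddCycleSet (G : SimpleGraph V) (C : Set V) : Prop :=
  ∃ (m : ℕ) (c : ZMod m → V), 3 ≤ m ∧ Odd m ∧ Function.Injective c ∧
    (∀ i, G.Adj (c i) (c (i + 1))) ∧
    (∀ i j, G.Adj (c i) (c j) → j = i + 1 ∨ i = j + 1) ∧
    C = Set.range c

/-- A maximal clique of `G`. -/
def IsMaximalClique (G : SimpleGraph V) (K : Set V) : Prop :=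
  G.IsClique K ∧ ∀ K' : Set V, G.IsClique K' → K ⊆ K' → K = K'

/-- Membership in HSTAB(G). -/
def memHSTAB (G : SimpleGraph V) (f : V → ℝ) : Prop :=
  (∀ x, 0 ≤ f x) ∧
  (∀ K : Set V, G.IsClique K → (∑ᶠ v ∈ K, f v) ≤ 1) ∧
  (∀ C : Set V, IsOddCycleSet G C → (∑ᶠ v ∈ C, f v) ≤ ((C.ncard : ℝ) - 1) / 2)

/-- Membership in TSTAB(G). -/
def memTSTAB (G : SimpleGraph V) (f : V → ℝ) : Prop :=
  (∀ x, 0 ≤ f x ∧ f x ≤ 1) ∧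
  (∀ x y, G.Adj x y → f x + f y ≤ 1) ∧
  (∀ C : Set V, IsOddCycleSet G C → (∑ᶠ v ∈ C, f v) ≤ ((C.ncard : ℝ) - 1) / 2)

/-- Membership in QSTAB(G). -/
def memQSTAB (G : SimpleGraph V) (f : V → ℝ) : Prop :=
  (∀ x, 0 ≤ f x) ∧
  (∀ K : Set V, G.IsClique K → (∑ᶠ v ∈ K, f v) ≤ 1)

/-- The stable set polytope STAB(G). -/
def STAB (G : SimpleGraph V) : Set (V → ℝ) :=
  convexHull ℝ {f : V → ℝ | ∃ S : Set V, IsStableSet G S ∧ f = S.indicator 1}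

/-- The set `U^(n)` of the paper, as a predicate on pairs `(g, d)`. -/
def memU (G : SimpleGraph V) (n : ℤ) (g : V → ℤ) (d : ℤ) : Prop :=
  (∀ v, n ≤ g v) ∧
  (∀ K : Set V, IsMaximalClique G K → (∑ᶠ v ∈ K, g v) ≤ d - n) ∧
  (∀ C : Set V, IsChordlessOddCycleSet G C → 5 ≤ C.ncard →
    2 * (∑ᶠ v ∈ C, g v) ≤ d * ((C.ncard : ℤ) - 1) - 2 * n)
/-- The 21 vertices `x_i, y_i, z_i`, `i ∈ ℤ/7ℤ`. -/
inductive Vtx : Type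
  | x : ZMod 7 → Vtx
  | y : ZMod 7 → Vtx
  | z : ZMod 7 → Vtx
  deriving DecidableEq, Fintype

/-- The oriented edge relation of the example graph. -/
def paperRel : Vtx → Vtx → Prop := fun u v =>
  (∃ i, u = Vtx.x i ∧ v = Vtx.x (i + 1)) ∨
  (∃ i, u = Vtx.x i ∧ v = Vtx.y i) ∨
  (∃ i, u = Vtx.y i ∧ v = Vtx.z i) ∨
  (∃ i, u = Vtx.z i ∧ v = Vtx.y (i + 1)) ∨
  (∃ i, u = Vtx.z i ∧ v = Vtx.z (i + 3))

instance : DecidableRel paperRel := fun u v => by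
  unfold paperRel; infer_instance

/-- The example graph of the paper. -/
def paperGraph : SimpleGraph Vtx where
  Adj u v := paperRel u v ∨ paperRel v u
  symm := ⟨fun _ _ h => Or.symm h⟩
  loopless := ⟨by
    show ∀ a, ¬(paperRel a a ∨ paperRel a a)
    decide⟩

/-- The function `μ` with `μ(x_i) = μ(z_i) = 4`, `μ(y_i) = 3`. -/
def muPaper : Vtx → ℤ
  | Vtx.x _ => 4
  | Vtx.y _ => 3
  | Vtx.z _ => 4


open Function Set

instance : DecidableRel paperGraph.Adj := fun u v => by
  show Decidable (paperRel u v ∨ paperRel v u); infer_instance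

def cyc5 (k : ZMod 7) (i : ZMod 5) : Vtx :=
  match i.val with
  | 0 => Vtx.x k
  | 1 => Vtx.y k
  | 2 => Vtx.z k
  | 3 => Vtx.y (k + 1)
  | _ => Vtx.x (k + 1)

def cycZ (i : ZMod 7) : Vtx := Vtx.z (3 * i)

lemma test1 : ∀ k : ZMod 7, Function.Injective (cyc5 k) := by decide
lemma test2 : ∀ (k : ZMod 7) (i : ZMod 5), paperGraph.Adj (cyc5 k i) (cyc5 k (i+1)) := by decide
lemma test3 : ∀ (k : ZMod 7) (i j : ZMod 5), paperGraph.Adj (cyc5 k i) (cyc5 k j) → j = i + 1 ∨ i = j + 1 := by decide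

lemma sum_zmod7 (f : ZMod 7 → ℤ) : ∑ j, f j = f 0 + f 1 + f 2 + f 3 + f 4 + f 5 + f 6 := by
  show ∑ j : Fin 7, f j = _
  exact Fin.sum_univ_seven f

lemma sum_zmod5 (f : ZMod 5 → ℤ) : ∑ j, f j = f 0 + f 1 + f 2 + f 3 + f 4 := by
  show ∑ j : Fin 5, f j = _
  exact Fin.sum_univ_five f

lemma cyc5eval (k : ZMod 7) (g : Vtx → ℤ) : g (cyc5 k 0) + g (cyc5 k 1) + g (cyc5 k 2) + g (cyc5 k 3) + g (cyc5 k 4)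
  = g (Vtx.x k) + g (Vtx.y k) + g (Vtx.z k) + g (Vtx.y (k+1)) + g (Vtx.x (k+1)) := rfl

lemma cycZeval (g : Vtx → ℤ) : g (cycZ 0) + g (cycZ 1) + g (cycZ 2) + g (cycZ 3) + g (cycZ 4) + g (cycZ 5) + g (cycZ 6)
  = g (Vtx.z 0) + g (Vtx.z 3) + g (Vtx.z 6) + g (Vtx.z 2) + g (Vtx.z 5) + g (Vtx.z 1) + g (Vtx.z 4) := rfl


lemma cycX_inj : Function.Injective (Vtx.x : ZMod 7 → Vtx) := by decide
lemma cycX_adj : ∀ i : ZMod 7, paperGraph.Adj (Vtx.x i) (Vtx.x (i+1)) := by decide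
lemma cycX_ch : ∀ i j : ZMod 7, paperGraph.Adj (Vtx.x i) (Vtx.x j) → j = i + 1 ∨ i = j + 1 := by decide
lemma cycZ_inj : Function.Injective cycZ := by decide
lemma cycZ_adj : ∀ i : ZMod 7, paperGraph.Adj (cycZ i) (cycZ (i+1)) := by decide
lemma cycZ_ch : ∀ i j : ZMod 7, paperGraph.Adj (cycZ i) (cycZ j) → j = i + 1 ∨ i = j + 1 := by decide

lemma xne : ∀ k : ZMod 7, Vtx.x k ≠ Vtx.x (k+1) := by decide
lemma xadj : ∀ k : ZMod 7, paperGraph.Adj (Vtx.x k) (Vtx.x (k+1)) := by decide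
lemma xmax : ∀ (k : ZMod 7) (w : Vtx), w ≠ Vtx.x k → w ≠ Vtx.x (k+1) →
    ¬(paperGraph.Adj (Vtx.x k) w ∧ paperGraph.Adj (Vtx.x (k+1)) w) := by decide

lemma edge_bound {g : Vtx → ℤ} {d : ℤ} (h : memU paperGraph 1 g d) {u v : Vtx}
    (hne : u ≠ v) (hadj : paperGraph.Adj u v)
    (hmax : ∀ w, w ≠ u → w ≠ v → ¬(paperGraph.Adj u w ∧ paperGraph.Adj v w)) :
    g u + g v ≤ d - 1 := by
  have hK : IsMaximalClique paperGraph {u, v} := by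
    constructor
    · rw [SimpleGraph.isClique_iff]
      rintro a (rfl | rfl) b (rfl | rfl) hab
      · exact absurd rfl hab
      · exact hadj
      · exact hadj.symm
      · exact absurd rfl hab
    · intro K' hK' hsub
      refine (Set.Subset.antisymm hsub ?_)
      intro w hw
      by_contra hwm
      have hwu : w ≠ u := fun e => hwm (by simp [e])
      have hwv : w ≠ v := fun e => hwm (by simp [e])
      exact hmax w hwu hwv
        ⟨hK' (hsub (by simp)) hw (Ne.symm hwu), hK' (hsub (by simp)) hw (Ne.symm hwv)⟩
  have := h.2.1 {u, v} hK
  rwa [finsum_mem_pair hne] at this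

lemma cycle_bound {g : Vtx → ℤ} {d : ℤ} (h : memU paperGraph 1 g d) {m : ℕ} [NeZero m]
    (c : ZMod m → Vtx) (h5 : 5 ≤ m) (ho : Odd m) (hinj : Function.Injective c)
    (hadj : ∀ i, paperGraph.Adj (c i) (c (i + 1)))
    (hch : ∀ i j, paperGraph.Adj (c i) (c j) → j = i + 1 ∨ i = j + 1) :
    2 * (∑ j, g (c j)) ≤ d * ((m : ℤ) - 1) - 2 := by
  have h3 : 3 ≤ m := by omega
  have hC : IsChordlessOddCycleSet paperGraph (Set.range c) :=
    ⟨m, c, h3, ho, hinj, hadj, hch, rfl⟩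
  have hn : (Set.range c).ncard = m := by
    rw [← Nat.card_coe_set_eq, Nat.card_range_of_injective hinj,
      Nat.card_eq_fintype_card, ZMod.card]
  have hs : (∑ᶠ v ∈ Set.range c, g v) = ∑ j, g (c j) := by
    rw [finsum_mem_range hinj, finsum_eq_sum_of_fintype]
  have h2 := h.2.2 (Set.range c) hC (by rw [hn]; exact h5)
  rw [hs, hn] at h2
  simpa using h2


lemma five_bound {g : Vtx → ℤ} {d : ℤ} (h : memU paperGraph 1 g d) (k k' : ZMod 7) (hk : k' = k + 1) :
    2 * (g (Vtx.x k) + g (Vtx.y k) + g (Vtx.z k) + g (Vtx.y k') + g (Vtx.x k')) ≤ 4 * d - 2 := by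
  subst hk
  have h2 := cycle_bound h (cyc5 k) (by norm_num) (by decide) (test1 k) (test2 k) (test3 k)
  rw [sum_zmod5] at h2
  have e := cyc5eval k g
  push_cast at h2
  omega

lemma edge_bound' {g : Vtx → ℤ} {d : ℤ} (h : memU paperGraph 1 g d) (k k' : ZMod 7) (hk : k' = k + 1) :
    g (Vtx.x k) + g (Vtx.x k') ≤ d - 1 := by
  subst hk
  exact edge_bound h (xne k) (xadj k) (xmax k)

lemma xcyc_bound {g : Vtx → ℤ} {d : ℤ} (h : memU paperGraph 1 g d) :
    2 * (g (Vtx.x 0) + g (Vtx.x 1) + g (Vtx.x 2) + g (Vtx.x 3) + g (Vtx.x 4) + g (Vtx.x 5) + g (Vtx.x 6)) ≤ 6 * d - 2 := by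
  have h2 := cycle_bound h Vtx.x (by norm_num) (by decide) cycX_inj cycX_adj cycX_ch
  rw [sum_zmod7] at h2
  push_cast at h2
  omega

lemma zcyc_bound {g : Vtx → ℤ} {d : ℤ} (h : memU paperGraph 1 g d) :
    2 * (g (Vtx.z 0) + g (Vtx.z 1) + g (Vtx.z 2) + g (Vtx.z 3) + g (Vtx.z 4) + g (Vtx.z 5) + g (Vtx.z 6)) ≤ 6 * d - 2 := by
  have h2 := cycle_bound h cycZ (by norm_num) (by decide) cycZ_inj cycZ_adj cycZ_ch
  rw [sum_zmod7] at h2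
  have e := cycZeval g
  push_cast at h2
  omega

lemma no_half (n : ℤ) : 2 * n ≠ 21 := by omega

theorem stmt14 : ¬ ∃ (μ₁ μ₂ : Vtx → ℤ) (d₁ d₂ : ℤ),
    memU paperGraph 1 μ₁ d₁ ∧ memU paperGraph 1 μ₂ d₂ ∧
    μ₁ + μ₂ = muPaper ∧ d₁ + d₂ = 10 := by
  rintro ⟨f1, f2, d1, d2, h1, h2, hsum, hd⟩
  have hp : ∀ v, f1 v + f2 v = muPaper v := fun v => congrFun hsum v
  have px0 : f1 (Vtx.x 0) + f2 (Vtx.x 0) = 4 := hp _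
  have px1 : f1 (Vtx.x 1) + f2 (Vtx.x 1) = 4 := hp _
  have px2 : f1 (Vtx.x 2) + f2 (Vtx.x 2) = 4 := hp _
  have px3 : f1 (Vtx.x 3) + f2 (Vtx.x 3) = 4 := hp _
  have px4 : f1 (Vtx.x 4) + f2 (Vtx.x 4) = 4 := hp _
  have px5 : f1 (Vtx.x 5) + f2 (Vtx.x 5) = 4 := hp _
  have px6 : f1 (Vtx.x 6) + f2 (Vtx.x 6) = 4 := hp _
  have py0 : f1 (Vtx.y 0) + f2 (Vtx.y 0) = 3 := hp _
  have py1 : f1 (Vtx.y 1) + f2 (Vtx.y 1) = 3 := hp _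
  have py2 : f1 (Vtx.y 2) + f2 (Vtx.y 2) = 3 := hp _
  have py3 : f1 (Vtx.y 3) + f2 (Vtx.y 3) = 3 := hp _
  have py4 : f1 (Vtx.y 4) + f2 (Vtx.y 4) = 3 := hp _
  have py5 : f1 (Vtx.y 5) + f2 (Vtx.y 5) = 3 := hp _
  have py6 : f1 (Vtx.y 6) + f2 (Vtx.y 6) = 3 := hp _
  have pz0 : f1 (Vtx.z 0) + f2 (Vtx.z 0) = 4 := hp _
  have pz1 : f1 (Vtx.z 1) + f2 (Vtx.z 1) = 4 := hp _
  have pz2 : f1 (Vtx.z 2) + f2 (Vtx.z 2) = 4 := hp _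
  have pz3 : f1 (Vtx.z 3) + f2 (Vtx.z 3) = 4 := hp _
  have pz4 : f1 (Vtx.z 4) + f2 (Vtx.z 4) = 4 := hp _
  have pz5 : f1 (Vtx.z 5) + f2 (Vtx.z 5) = 4 := hp _
  have pz6 : f1 (Vtx.z 6) + f2 (Vtx.z 6) = 4 := hp _
  have E10 := edge_bound' h1 0 1 (by decide)
  have F10 := five_bound h1 0 1 (by decide)
  have E11 := edge_bound' h1 1 2 (by decide)
  have F11 := five_bound h1 1 2 (by decide)
  have E12 := edge_bound' h1 2 3 (by decide)
  have F12 := five_bound h1 2 3 (by decide)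
  have E13 := edge_bound' h1 3 4 (by decide)
  have F13 := five_bound h1 3 4 (by decide)
  have E14 := edge_bound' h1 4 5 (by decide)
  have F14 := five_bound h1 4 5 (by decide)
  have E15 := edge_bound' h1 5 6 (by decide)
  have F15 := five_bound h1 5 6 (by decide)
  have E16 := edge_bound' h1 6 0 (by decide)
  have F16 := five_bound h1 6 0 (by decide)
  have X1 := xcyc_bound h1
  have Z1 := zcyc_bound h1
  have E20 := edge_bound' h2 0 1 (by decide)
  have F20 := five_bound h2 0 1 (by decide)
  have E21 := edge_bound' h2 1 2 (by decide)
  have F21 := five_bound h2 1 2 (by decide)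
  have E22 := edge_bound' h2 2 3 (by decide)
  have F22 := five_bound h2 2 3 (by decide)
  have E23 := edge_bound' h2 3 4 (by decide)
  have F23 := five_bound h2 3 4 (by decide)
  have E24 := edge_bound' h2 4 5 (by decide)
  have F24 := five_bound h2 4 5 (by decide)
  have E25 := edge_bound' h2 5 6 (by decide)
  have F25 := five_bound h2 5 6 (by decide)
  have E26 := edge_bound' h2 6 0 (by decide)
  have F26 := five_bound h2 6 0 (by decide)
  have X2 := xcyc_bound h2
  have Z2 := zcyc_bound h2
  have hA1 : 2 * (f1 (Vtx.x 0) + f1 (Vtx.x 1) + f1 (Vtx.x 2) + f1 (Vtx.x 3) + f1 (Vtx.x 4) + f1 (Vtx.x 5) + f1 (Vtx.x 6)) = 6 * d1 - 2 := by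
    linarith only [X1, X2, hd, px0, px1, px2, px3, px4, px5, px6]
  have hC1 : 2 * (f1 (Vtx.z 0) + f1 (Vtx.z 1) + f1 (Vtx.z 2) + f1 (Vtx.z 3) + f1 (Vtx.z 4) + f1 (Vtx.z 5) + f1 (Vtx.z 6)) = 6 * d1 - 2 := by
    linarith only [Z1, Z2, hd, pz0, pz1, pz2, pz3, pz4, pz5, pz6]
  have hd1 : 5 ≤ d1 := by
    linarith only [hA1, E10, E11, E12, E13, E14, E15, E16]
  have hA2 : 2 * (f2 (Vtx.x 0) + f2 (Vtx.x 1) + f2 (Vtx.x 2) + f2 (Vtx.x 3) + f2 (Vtx.x 4) + f2 (Vtx.x 5) + f2 (Vtx.x 6)) = 6 * d2 - 2 := by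
    linarith only [X1, X2, hd, px0, px1, px2, px3, px4, px5, px6]
  have hd2 : 5 ≤ d2 := by
    linarith only [hA2, E20, E21, E22, E23, E24, E25, E26]
  have hd1e : d1 = 5 := le_antisymm (by linarith only [hd, hd2]) hd1
  have G0 : 2 * (f1 (Vtx.x 0) + f1 (Vtx.y 0) + f1 (Vtx.z 0) + f1 (Vtx.y 1) + f1 (Vtx.x 1)) = 4 * d1 - 2 := by
    linarith only [F10, F20, hd, px0, py0, pz0, py1, px1]
  have G1 : 2 * (f1 (Vtx.x 1) + f1 (Vtx.y 1) + f1 (Vtx.z 1) + f1 (Vtx.y 2) + f1 (Vtx.x 2)) = 4 * d1 - 2 := by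
    linarith only [F11, F21, hd, px1, py1, pz1, py2, px2]
  have G2 : 2 * (f1 (Vtx.x 2) + f1 (Vtx.y 2) + f1 (Vtx.z 2) + f1 (Vtx.y 3) + f1 (Vtx.x 3)) = 4 * d1 - 2 := by
    linarith only [F12, F22, hd, px2, py2, pz2, py3, px3]
  have G3 : 2 * (f1 (Vtx.x 3) + f1 (Vtx.y 3) + f1 (Vtx.z 3) + f1 (Vtx.y 4) + f1 (Vtx.x 4)) = 4 * d1 - 2 := by
    linarith only [F13, F23, hd, px3, py3, pz3, py4, px4]
  have G4 : 2 * (f1 (Vtx.x 4) + f1 (Vtx.y 4) + f1 (Vtx.z 4) + f1 (Vtx.y 5) + f1 (Vtx.x 5)) = 4 * d1 - 2 := by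
    linarith only [F14, F24, hd, px4, py4, pz4, py5, px5]
  have G5 : 2 * (f1 (Vtx.x 5) + f1 (Vtx.y 5) + f1 (Vtx.z 5) + f1 (Vtx.y 6) + f1 (Vtx.x 6)) = 4 * d1 - 2 := by
    linarith only [F15, F25, hd, px5, py5, pz5, py6, px6]
  have G6 : 2 * (f1 (Vtx.x 6) + f1 (Vtx.y 6) + f1 (Vtx.z 6) + f1 (Vtx.y 0) + f1 (Vtx.x 0)) = 4 * d1 - 2 := by
    linarith only [F16, F26, hd, px6, py6, pz6, py0, px0]
  have hB : 2 * (f1 (Vtx.y 0) + f1 (Vtx.y 1) + f1 (Vtx.y 2) + f1 (Vtx.y 3) + f1 (Vtx.y 4) + f1 (Vtx.y 5) + f1 (Vtx.y 6)) = 21 := by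
    linarith only [G0, G1, G2, G3, G4, G5, G6, hA1, hC1, hd1e]
  exact no_half _ hB
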